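/- Let α, β, δ ∈ ℂ with (α, β, δ) ≠ (0, 0, 0), and consider the vector field V(x,y,p) = (αx + βy, δx − αy, δ − 2αp − βp²) on ℂ³ (the lift to (x,y,p)-space of the infinitesimal automorphism (αx+βy)∂/∂x + (δx−αy)∂/∂y of the quartic ODE y'' = (y − x y')³). If (x, y, p) ∈ ℂ³ satisfies V(x,y,p) = (0,0,0) and (x,y) ≠ (0,0), then α² + βδ = 0, β ≠ 0, p = −α/β, and y = x·p. In particular, if the discriminant α² + βδ is nonzero, every zero of V has x = y = 0, and all zeros of V with (x,y) ≠ (0,0) lie on the hypersurface {y = xp}. -/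
import Mathlib


/-- Zero-set analysis of the lifted infinitesimal automorphisms
`V(x,y,p) = (αx + βy, δx − αy, δ − 2αp − βp²)` of the quartic: any zero of `V`
with `(x,y) ≠ (0,0)` forces `α² + βδ = 0`, `β ≠ 0`, `p = −α/β` and lies on the
hypersurface `{y = xp}`. -/
theorem quartic_isotropy_fixed_points
    (α β δ : ℂ) (hne : (α, β, δ) ≠ (0, 0, 0)) (x y p : ℂ)
    (h1 : α * x + β * y = 0) (h2 : δ * x - α * y = 0)
    (h3 : δ - 2 * α * p - β * p ^ 2 = 0)
    (hxy : (x, y) ≠ (0, 0)) :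
    α ^ 2 + β * δ = 0 ∧ β ≠ 0 ∧ p = -α / β ∧ y = x * p := by
  have hdisc : α ^ 2 + β * δ = 0 := by
    have hx : (α ^ 2 + β * δ) * x = 0 := by linear_combination α * h1 + β * h2
    have hy : (α ^ 2 + β * δ) * y = 0 := by linear_combination δ * h1 - α * h2
    rcases mul_eq_zero.mp hx with h | h
    · exact h
    · rcases mul_eq_zero.mp hy with h' | h'
      · exact h'
      · exact absurd (Prod.ext h h') hxy
  have hβ : β ≠ 0 := by
    intro hb
    have hα : α = 0 := by
      have h2 : α ^ 2 = 0 := by linear_combination hdisc - δ * hb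
      exact pow_eq_zero_iff (n := 2) (by norm_num) |>.mp h2
    have hδ : δ = 0 := by linear_combination h3 + 2 * p * hα + p ^ 2 * hb
    exact hne (by simp [hα, hb, hδ])
  have hsq : (α + β * p) ^ 2 = 0 := by
    linear_combination hdisc - β * h3
  have hp : α + β * p = 0 := pow_eq_zero_iff (n := 2) (by norm_num) |>.mp hsq
  have hpval : p = -α / β := by field_simp; linear_combination hp
  refine ⟨hdisc, hβ, hpval, ?_⟩
  have hy : β * y = -(α * x) := by linear_combination h1
  have : β * y = β * (x * p) := by linear_combination hy - x * hp
  exact mul_left_cancel₀ hβ this
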